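/- arXiv:1602.00992 — 5 statements merged into one kernel-verified Lean document; each statement's English description precedes it below -/
import Mathlib

section
/- Every finite-dimensional complex representation of the Lie algebra W_> is trivial, i.e., if ρ : W_> → End(E) is a Lie algebra homomorphism with E a finite-dimensional complex vector space, then ρ(L_k) = 0 for all k ≥ -1. -/
/-- `L : ℤ → W` (restricted to indices `k ≥ -1`) is a basis of the complex Lie algebra `W`
realizing it as `W_>`, the Lie algebra with basis `{L_k}_{k ≥ -1}` and bracket
`[L_i, L_j] = (i - j) L_{i+j}`. -/
def IsWittBasis {W : Type*} [LieRing W] [LieAlgebra ℂ W] (L : ℤ → W) : Prop :=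
  (∀ i j : ℤ, -1 ≤ i → -1 ≤ j → ⁅L i, L j⁆ = ((i - j : ℤ) : ℂ) • L (i + j)) ∧
  LinearIndependent ℂ (fun k : {k : ℤ // -1 ≤ k} => L k.1) ∧
  Submodule.span ℂ (Set.range fun k : {k : ℤ // -1 ≤ k} => L k.1) = ⊤

attribute [local instance 100] LieRing.ofAssociativeRing

/-- Every finite-dimensional complex representation of the Lie algebra `W_>` is trivial:
if `ρ : W_> → End(E)` is a Lie algebra homomorphism with `E` a finite-dimensional complex
vector space, then `ρ(L_k) = 0` for all `k ≥ -1`. -/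
theorem finiteDimensional_rep_trivial {W E : Type*} [LieRing W] [LieAlgebra ℂ W]
    [AddCommGroup E] [Module ℂ E] [FiniteDimensional ℂ E]
    (L : ℤ → W) (hW : IsWittBasis L)
    (ρ : W →ₗ⁅ℂ⁆ Module.End ℂ E) :
    ∀ k : ℤ, -1 ≤ k → ρ (L k) = 0 := by
  obtain ⟨hbr, -, -⟩ := hW
  set A : ℤ → Module.End ℂ E := fun k => ρ (L k) with hA
  have key : ∀ i j : ℤ, -1 ≤ i → -1 ≤ j →
      ⁅A i, A j⁆ = ((i - j : ℤ) : ℂ) • A (i + j) := by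
    intro i j hi hj
    have : ρ ⁅L i, L j⁆ = ρ (((i - j : ℤ) : ℂ) • L (i + j)) := by rw [hbr i j hi hj]
    simpa [hA, LieHom.map_lie, map_smul] using this
  set D := LieAlgebra.ad ℂ (Module.End ℂ E) (A 0) with hD
  have hev : ∀ k : ℤ, -1 ≤ k → A k ≠ 0 →
      D.HasEigenvector ((-k : ℤ) : ℂ) (A k) := by
    intro k hk hne
    refine ⟨?_, hne⟩
    rw [Module.End.mem_eigenspace_iff]
    have := key 0 k (by norm_num) hk
    simpa [hD, LieAlgebra.ad_apply] using this
  set S : Set {k : ℤ // -1 ≤ k} := {k | A k.1 ≠ 0} with hS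
  have hli : LinearIndependent ℂ (fun k : S => A k.1.1) := by
    refine D.eigenvectors_linearIndependent' (fun k : S => ((-k.1.1 : ℤ) : ℂ)) ?_ _
      (fun k => hev _ k.1.2 k.2)
    intro a b h
    simp only [Int.cast_inj, Int.cast_neg, neg_inj] at h
    exact Subtype.ext (Subtype.ext h)
  have hfin : Finite S := hli.finite
  have hTfin : ({k : ℤ | -1 ≤ k ∧ A k ≠ 0}).Finite := by
    have : {k : ℤ | -1 ≤ k ∧ A k ≠ 0} =
        Subtype.val '' ((fun k : {k : ℤ // -1 ≤ k} => k) '' S) := by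
      ext k
      simp only [Set.mem_image, Set.mem_setOf_eq, hS]
      constructor
      · rintro ⟨hk, hne⟩; exact ⟨⟨k, hk⟩, ⟨⟨k, hk⟩, hne, rfl⟩, rfl⟩
      · rintro ⟨⟨k', hk'⟩, ⟨a, ha, rfl⟩, rfl⟩; exact ⟨hk', ha⟩
    rw [this]
    exact ((S.toFinite).image _).image _
  obtain ⟨N, hN⟩ := hTfin.bddAbove
  have htop : ∀ k : ℤ, -1 ≤ k → N < k → A k = 0 := by
    intro k hk1 hk
    by_contra hne
    exact absurd (hN ⟨hk1, hne⟩) (not_le.2 hk)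
  have main : ∀ d : ℕ, ∀ k : ℤ, -1 ≤ k → N + 1 - k ≤ (d : ℤ) → A k = 0 := by
    intro d
    induction d with
    | zero => intro k hk hd; exact htop k hk (by omega)
    | succ d ih =>
      intro k hk hd
      rcases lt_or_ge N k with h | h
      · exact htop k hk h
      · have h1 : A (k + 1) = 0 := ih (k + 1) (by omega) (by omega)
        have h2 := key (-1) (k + 1) (by norm_num) (by omega)
        have h3 : ((-1 - (k + 1) : ℤ) : ℂ) • A (-1 + (k + 1)) = 0 := by
          rw [← h2, h1]; simp
        have h4 : ((-1 - (k + 1) : ℤ) : ℂ) ≠ 0 := by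
          exact_mod_cast (by omega : (-1 - (k + 1) : ℤ) ≠ 0)
        have h5 : A (-1 + (k + 1)) = 0 := by
          rcases smul_eq_zero.mp h3 with h | h
          · exact absurd h h4
          · exact h
        simpa using h5
  intro k hk
  exact main (N + 1 - k).toNat k hk (by omega)
end

section
/- The Lie algebra W_> is simple: its only ideals are 0 and W_> itself. -/
/-- The Lie algebra `W_>` is simple: its only ideals are `0` and `W_>` itself. -/
theorem wittPos_simple {W : Type*} [LieRing W] [LieAlgebra ℂ W]
    (L : ℤ → W) (hW : IsWittBasis L) :
    ∀ I : LieIdeal ℂ W, I = ⊥ ∨ I = ⊤ := by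
  obtain ⟨hbr, hli, hsp⟩ := hW
  intro I
  by_cases hbot : I = ⊥
  · exact Or.inl hbot
  right
  -- get a nonzero element of I
  obtain ⟨x, hxI, hx0⟩ : ∃ x ∈ I, x ≠ 0 := by
    by_contra h
    push_neg at h
    exact hbot ((LieSubmodule.eq_bot_iff I).mpr h)
  -- Step 1: extract a single basis vector in I
  have key : ∀ n : ℕ, ∀ (s : Finset {k : ℤ // -1 ≤ k}) (g : {k : ℤ // -1 ≤ k} → ℂ),
      s.card = n → (∑ k ∈ s, g k • L k.1) ∈ I →
      ((∑ k ∈ s, g k • L k.1) = 0 ∨ ∃ k : {k : ℤ // -1 ≤ k}, L k.1 ∈ I) := by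
    intro n
    induction n with
    | zero =>
      intro s g hs _
      left
      rw [Finset.card_eq_zero.mp hs]
      simp
    | succ n ih =>
      intro s g hs hmem
      obtain ⟨j, hj⟩ : s.Nonempty := Finset.card_pos.mp (by omega)
      set y := ((j.1 : ℂ)) • (∑ k ∈ s, g k • L k.1) + ⁅L 0, ∑ k ∈ s, g k • L k.1⁆ with hy_def
      have hyI : y ∈ I := I.add_mem (I.smul_mem _ hmem) (I.lie_mem hmem)
      have hy : y = ∑ k ∈ s, (((j.1 - k.1 : ℤ) : ℂ) * g k) • L k.1 := by
        have hls := map_sum (LieAlgebra.ad ℂ W (L 0)) (fun k => g k • L k.1) s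
        simp only [LieAlgebra.ad_apply] at hls
        rw [hy_def, Finset.smul_sum, hls, ← Finset.sum_add_distrib]
        refine Finset.sum_congr rfl fun k _ => ?_
        rw [lie_smul, hbr 0 k.1 (by norm_num) k.2, smul_smul, smul_smul, zero_add,
          ← add_smul]
        congr 1
        push_cast
        ring
      have hy2 : y = ∑ k ∈ s.erase j, (((j.1 - k.1 : ℤ) : ℂ) * g k) • L k.1 := by
        rw [hy, ← Finset.sum_erase_add s _ hj]
        simp
      have hcard : (s.erase j).card = n := by
        rw [Finset.card_erase_of_mem hj, hs]
        omega
      rcases ih (s.erase j) (fun k => ((j.1 - k.1 : ℤ) : ℂ) * g k) hcard (hy2 ▸ hyI) with h0 | hex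
      · -- all other coefficients vanish
        have hz : ∀ k ∈ s.erase j, ((j.1 - k.1 : ℤ) : ℂ) * g k = 0 :=
          linearIndependent_iff'.mp hli (s.erase j) _ h0
        have hgz : ∀ k ∈ s.erase j, g k = 0 := by
          intro k hk
          have hkj : k ≠ j := (Finset.mem_erase.mp hk).1
          have h1 := hz k hk
          have h2 : ((j.1 - k.1 : ℤ) : ℂ) ≠ 0 := by
            rw [Int.cast_ne_zero]
            intro h
            exact hkj (Subtype.ext (by omega))
          exact (mul_eq_zero.mp h1).resolve_left h2
        have hx_eq : (∑ k ∈ s, g k • L k.1) = g j • L j.1 := by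
          rw [← Finset.sum_erase_add s _ hj, Finset.sum_eq_zero (fun k hk => by
            rw [hgz k hk, zero_smul]), zero_add]
        by_cases hgj : g j = 0
        · left; rw [hx_eq, hgj, zero_smul]
        · right
          refine ⟨j, ?_⟩
          have : (g j)⁻¹ • (∑ k ∈ s, g k • L k.1) ∈ I := I.smul_mem _ hmem
          rwa [hx_eq, inv_smul_smul₀ hgj] at this
      · exact Or.inr hex
  -- apply key to x
  have hx_span : x ∈ Submodule.span ℂ (Set.range fun k : {k : ℤ // -1 ≤ k} => L k.1) := by
    rw [hsp]; trivial
  obtain ⟨c, hc⟩ := (Finsupp.mem_span_range_iff_exists_finsupp).mp hx_span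
  have hc' : (∑ k ∈ c.support, c k • L k.1) = x := hc
  obtain ⟨k0, hk0⟩ : ∃ k : {k : ℤ // -1 ≤ k}, L k.1 ∈ I := by
    rcases key c.support.card c.support c rfl (hc' ▸ hxI) with h0 | hex
    · exact absurd (hc' ▸ h0) hx0
    · exact hex
  -- Step 2: descend to L (-1)
  have step : ∀ n : ℕ, ∀ k : ℤ, -1 ≤ k → k + 1 = n → L k ∈ I → L (-1) ∈ I := by
    intro n
    induction n with
    | zero =>
      intro k hk hkn hLk
      have : k = -1 := by omega
      rwa [this] at hLk
    | succ n ih =>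
      intro k hk hkn hLk
      by_cases hk1 : k = -1
      · rwa [hk1] at hLk
      have hk0 : 0 ≤ k := by omega
      have hb := hbr (-1) k le_rfl hk
      have hmem : ((-1 - k : ℤ) : ℂ) • L (-1 + k) ∈ I := hb ▸ I.lie_mem hLk
      have hne : ((-1 - k : ℤ) : ℂ) ≠ 0 := by
        rw [Int.cast_ne_zero]; omega
      have hL' : L (-1 + k) ∈ I := by
        have := I.smul_mem (((-1 - k : ℤ) : ℂ))⁻¹ hmem
        rwa [inv_smul_smul₀ hne] at this
      exact ih (-1 + k) (by omega) (by omega) hL'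
  have hL1 : L (-1) ∈ I := step (k0.1 + 1).toNat k0.1 k0.2 (by omega) hk0
  -- Step 3: generate all basis vectors
  have all : ∀ m : ℤ, -1 ≤ m → L m ∈ I := by
    intro m hm
    have hb := hbr (m + 1) (-1) (by omega) le_rfl
    have heq1 : m + 1 - -1 = m + 2 := by ring
    have heq2 : m + 1 + -1 = m := by ring
    rw [heq1, heq2] at hb
    have hmem : ((m + 2 : ℤ) : ℂ) • L m ∈ I := hb ▸ I.lie_mem hL1
    have hne : ((m + 2 : ℤ) : ℂ) ≠ 0 := by
      rw [Int.cast_ne_zero]; omega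
    have := I.smul_mem (((m + 2 : ℤ) : ℂ))⁻¹ hmem
    rwa [inv_smul_smul₀ hne] at this
  -- Step 4: conclude I = ⊤
  have hle : Submodule.span ℂ (Set.range fun k : {k : ℤ // -1 ≤ k} => L k.1) ≤
      (I : Submodule ℂ W) := by
    rw [Submodule.span_le]
    rintro _ ⟨k, rfl⟩
    exact all k.1 k.2
  rw [← LieSubmodule.toSubmodule_eq_top]
  exact eq_top_iff.mpr (hsp ▸ hle)
end

section
/- Let ρ : W_> → g be a linear map into a Lie algebra g such that: (a) [ρ(L_{-1}), ρ(L_j)] = -(1+j)ρ(L_{j-1}) for all j ≥ -1; (b) [ρ(L_0), ρ(L_j)] = -j·ρ(L_j) for all j ≥ -1; (c) [ρ(L_1), ρ(L_j)] = (1-j)ρ(L_{j+1}) for all j ≥ 1; and (d) for each n ≥ 3, the map ad(ρ(L_{-1})) is injective on the span of elements X satisfying [ρ(L_0), X] = -n·X, and each bracket [ρ(L_i),ρ(L_j)] - (i-j)ρ(L_{i+j}) with i,j ≥ 1 lies in that span for n = i+j. Then ρ is a Lie algebra homomorphism: [ρ(L_i),ρ(L_j)] = (i-j)ρ(L_{i+j})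 for all i,j ≥ -1. -/
/-- The inductive argument extending an `sl(2)`-map to `W_>` (Step 4 of Theorem 2.8):
if a family `ρ k` (playing the role of `ρ(L_k)`) satisfies the bracket relations with
`ρ(L_{-1})`, `ρ(L_0)`, `ρ(L_1)`, and `ad(ρ(L_{-1}))` is injective on the relevant
eigenspaces of `ad(ρ(L_0))` which contain the defects, then `ρ` is a Lie algebra
homomorphism: `[ρ(L_i), ρ(L_j)] = (i-j) ρ(L_{i+j})` for all `i, j ≥ -1`. -/
theorem extend_to_wittPos_hom {g : Type*} [LieRing g] [LieAlgebra ℂ g]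
    (ρ : ℤ → g)
    (ha : ∀ j : ℤ, -1 ≤ j → ⁅ρ (-1), ρ j⁆ = ((-(1 + j) : ℤ) : ℂ) • ρ (j - 1))
    (hb : ∀ j : ℤ, -1 ≤ j → ⁅ρ 0, ρ j⁆ = ((-j : ℤ) : ℂ) • ρ j)
    (hc : ∀ j : ℤ, 1 ≤ j → ⁅ρ 1, ρ j⁆ = ((1 - j : ℤ) : ℂ) • ρ (j + 1))
    (hd1 : ∀ n : ℤ, 3 ≤ n →
      ∀ X ∈ Submodule.span ℂ {X : g | ⁅ρ 0, X⁆ = ((-n : ℤ) : ℂ) • X},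
        ⁅ρ (-1), X⁆ = 0 → X = 0)
    (hd2 : ∀ i j : ℤ, 1 ≤ i → 1 ≤ j →
      ⁅ρ i, ρ j⁆ - ((i - j : ℤ) : ℂ) • ρ (i + j) ∈
        Submodule.span ℂ {X : g | ⁅ρ 0, X⁆ = ((-(i + j) : ℤ) : ℂ) • X}) :
    ∀ i j : ℤ, -1 ≤ i → -1 ≤ j →
      ⁅ρ i, ρ j⁆ = ((i - j : ℤ) : ℂ) • ρ (i + j) := by
  have key : ∀ n : ℕ, ∀ i j : ℤ, 1 ≤ i → 1 ≤ j → i + j = (n : ℤ) →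
      ⁅ρ i, ρ j⁆ = ((i - j : ℤ) : ℂ) • ρ (i + j) := by
    intro n
    induction n using Nat.strong_induction_on with
    | _ n IH =>
    intro i j hi hj hn
    rcases eq_or_lt_of_le hi with hi1 | hi2
    · rw [← hi1, show (1 : ℤ) + j = j + 1 by ring]
      exact hc j hj
    · rcases eq_or_lt_of_le hj with hj1 | hj2
      · rw [← hj1, ← lie_skew, hc i (by omega),
          show ((i - 1 : ℤ) : ℂ) = -((1 - i : ℤ) : ℂ) by push_cast; ring,
          show i + 1 = 1 + i by ring, neg_smul]
      · -- main inductive case: i, j ≥ 2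
        have h3 : (3 : ℤ) ≤ i + j := by omega
        have hIH1 : ⁅ρ (i - 1), ρ j⁆ = ((i - 1 - j : ℤ) : ℂ) • ρ (i - 1 + j) :=
          IH (n - 1) (by omega) (i - 1) j (by omega) hj (by omega)
        have hIH2 : ⁅ρ i, ρ (j - 1)⁆ = ((i - (j - 1) : ℤ) : ℂ) • ρ (i + (j - 1)) :=
          IH (n - 1) (by omega) i (j - 1) (by omega) (by omega) (by omega)
        have hzero : ⁅ρ (-1), ⁅ρ i, ρ j⁆ - ((i - j : ℤ) : ℂ) • ρ (i + j)⁆ = 0 := by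
          rw [lie_sub, lie_smul, leibniz_lie, ha i (by omega), ha j (by omega),
            ha (i + j) (by omega), smul_lie, lie_smul, hIH1, hIH2,
            show i - 1 + j = i + j - 1 by ring, show i + (j - 1) = i + j - 1 by ring]
          simp only [smul_smul]
          rw [← add_smul, ← sub_smul]
          convert zero_smul ℂ (ρ (i + j - 1)) using 2
          push_cast
          ring
        have := hd1 (i + j) h3 _ (hd2 i j hi hj) hzero
        exact sub_eq_zero.mp this
  intro i j hi hj
  rcases eq_or_lt_of_le hi with hi1 | hi2
  · rw [← hi1, show (-1 : ℤ) + j = j - 1 by ring,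
      show ((-1 - j : ℤ) : ℂ) = ((-(1 + j) : ℤ) : ℂ) by push_cast; ring]
    exact ha j hj
  · rcases eq_or_lt_of_le hj with hj1 | hj2
    · rw [← hj1, ← lie_skew, ha i hi,
        show ((i - -1 : ℤ) : ℂ) = -((-(1 + i) : ℤ) : ℂ) by push_cast; ring,
        show i + -1 = i - 1 by ring, neg_smul]
    · rcases eq_or_lt_of_le (show (0 : ℤ) ≤ i by omega) with hi0 | hi0
      · rw [← hi0, show (0 : ℤ) + j = j by ring,
          show ((0 - j : ℤ) : ℂ) = ((-j : ℤ) : ℂ) by push_cast; ring]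
        exact hb j (by omega)
      · rcases eq_or_lt_of_le (show (0 : ℤ) ≤ j by omega) with hj0 | hj0
        · rw [← hj0, ← lie_skew, hb i (by omega),
            show ((i - 0 : ℤ) : ℂ) = -((-i : ℤ) : ℂ) by push_cast; ring,
            show i + 0 = i by ring, neg_smul]
        · exact key (i + j).toNat i j (by omega) (by omega) (by omega)
end

section
/- Let ρ_1 : W_> → End(V_1) and ρ_2 : W_> → End(V_2) be representations of W_>, and ρ = ρ_1 ⊗ 1 + 1 ⊗ ρ_2 on V_1 ⊗ V_2. Let f_{1,1},…,f_{1,r} ∈ V_1 and f_{2,1},…,f_{2,r} ∈ V_2, each family linearly independent. If ρ(L_k)(Σ_j f_{1,j} ⊗ f_{2,j}) = 0 for all k ≥ -1, then ρ_i(L_k)(f_{i,j}) = 0 for all i ∈ {1,2}, all j, and all k ≥ -1. -/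
attribute [local instance 100] LieRing.ofAssociativeRing

lemma witt_findim_trivial {E : Type*} [AddCommGroup E] [Module ℂ E] [FiniteDimensional ℂ E]
    (A : ℤ → Module.End ℂ E)
    (hA : ∀ i j : ℤ, -1 ≤ i → -1 ≤ j → ⁅A i, A j⁆ = ((i - j : ℤ) : ℂ) • A (i + j)) :
    ∀ k : ℤ, -1 ≤ k → A k = 0 := by
  set D : Module.End ℂ (Module.End ℂ E) :=
    LinearMap.mulLeft ℂ (A 0) - LinearMap.mulRight ℂ (A 0) with hD
  have heig : ∀ k : ℤ, -1 ≤ k → D (A k) = ((-k : ℤ) : ℂ) • A k := by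
    intro k hk
    have h0 := hA 0 k (by norm_num) hk
    have : D (A k) = ⁅A 0, A k⁆ := by
      simp [hD, Ring.lie_def, LinearMap.sub_apply, LinearMap.mulLeft_apply,
        LinearMap.mulRight_apply]
    rw [this, h0]
    norm_num
  set S : Set ℤ := {k : ℤ | -1 ≤ k ∧ A k ≠ 0} with hS
  have hSfin : S.Finite := by
    have hli : LinearIndependent ℂ (fun k : S => A k.1) := by
      apply D.eigenvectors_linearIndependent' (fun k : S => ((-k.1 : ℤ) : ℂ))
      · intro a b hab
        simp only at hab
        have h2 : (-a.1 : ℤ) = (-b.1 : ℤ) := by exact_mod_cast hab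
        exact Subtype.ext (by omega)
      · intro k
        exact ⟨Module.End.mem_eigenspace_iff.2 (heig k.1 k.2.1), k.2.2⟩
    have : Finite S := hli.finite
    exact S.toFinite
  obtain ⟨M, hM⟩ := hSfin.bddAbove
  have hvan : ∀ k : ℤ, M < k → -1 ≤ k → A k = 0 := by
    intro k hMk hk
    by_contra h
    exact absurd (hM ⟨hk, h⟩) (by omega)
  have hdown : ∀ n : ℕ, ∀ k : ℤ, -1 ≤ k → M + 1 - n ≤ k → A k = 0 := by
    intro n
    induction n with
    | zero => intro k hk hk2; exact hvan k (by omega) hk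
    | succ n ih =>
      intro k hk hk2
      by_cases hcase : M + 1 - n ≤ k
      · exact ih k hk hcase
      · have hk1 : A (k + 1) = 0 := ih (k + 1) (by omega) (by omega)
        have hb := hA (-1) (k + 1) (by norm_num) (by omega)
        rw [hk1] at hb
        simp only [lie_zero] at hb
        have hcoef : ((-1 - (k + 1) : ℤ) : ℂ) ≠ 0 := by
          rw [Ne, Int.cast_eq_zero]; omega
        have : A (-1 + (k + 1)) = 0 := (smul_eq_zero_iff_right hcoef).1 hb.symm
        simpa using this
  intro k hk
  exact hdown (M + 1 - k).toNat k hk (by omega)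

lemma exists_dual_family {V : Type*} [AddCommGroup V] [Module ℂ V] {r : ℕ} {f : Fin r → V}
    (h : LinearIndependent ℂ f) :
    ∃ φ : Fin r → (V →ₗ[ℂ] ℂ), ∀ m j, φ m (f j) = if m = j then 1 else 0 := by
  set p := Submodule.span ℂ (Set.range f) with hp
  obtain ⟨q, hq⟩ := p.exists_isCompl
  set b : Module.Basis (Fin r) ℂ p := Module.Basis.span h with hb
  refine ⟨fun m => (b.coord m) ∘ₗ (p.linearProjOfIsCompl q hq), fun m j => ?_⟩
  have hmem : f j ∈ p := Submodule.subset_span (Set.mem_range_self j)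
  have hproj : p.linearProjOfIsCompl q hq (f j) = ⟨f j, hmem⟩ :=
    Submodule.linearProjOfIsCompl_apply_left hq ⟨f j, hmem⟩
  have hbj : (⟨f j, hmem⟩ : p) = b j := by
    apply Subtype.ext
    simp [hb, Module.Basis.span_apply h j]
  simp only [LinearMap.comp_apply, hproj, hbj, Module.Basis.coord_apply, Module.Basis.repr_self]
  simp [Finsupp.single_apply, eq_comm]

lemma one_side_trivial {W V1 V2 : Type*} [LieRing W] [LieAlgebra ℂ W]
    [AddCommGroup V1] [Module ℂ V1] [AddCommGroup V2] [Module ℂ V2]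
    (L : ℤ → W)
    (hL : ∀ i j : ℤ, -1 ≤ i → -1 ≤ j → ⁅L i, L j⁆ = ((i - j : ℤ) : ℂ) • L (i + j))
    (ρ1 : W →ₗ⁅ℂ⁆ Module.End ℂ V1) (ρ2 : W →ₗ⁅ℂ⁆ Module.End ℂ V2)
    (r : ℕ) (f1 : Fin r → V1) (f2 : Fin r → V2)
    (h2 : LinearIndependent ℂ f2)
    (hz : ∀ k : ℤ, -1 ≤ k →
      (∑ j : Fin r, (ρ1 (L k) (f1 j)) ⊗ₜ[ℂ] f2 j)
        + (∑ j : Fin r, f1 j ⊗ₜ[ℂ] (ρ2 (L k) (f2 j))) = 0) :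
    ∀ k : ℤ, -1 ≤ k → ∀ j : Fin r, ρ1 (L k) (f1 j) = 0 := by
  obtain ⟨φ, hφ⟩ := exists_dual_family h2
  set E : Submodule ℂ V1 := Submodule.span ℂ (Set.range f1) with hE
  have hmem : ∀ j, f1 j ∈ E := fun j => Submodule.subset_span (Set.mem_range_self j)
  have hformula : ∀ k : ℤ, -1 ≤ k → ∀ m : Fin r,
      ρ1 (L k) (f1 m) = -∑ j : Fin r, (φ m (ρ2 (L k) (f2 j))) • f1 j := by
    intro k hk m
    have h1 := congrArg (((TensorProduct.rid ℂ V1).toLinearMap).comp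
      (LinearMap.lTensor V1 (φ m))) (hz k hk)
    simp only [map_add, map_sum, LinearMap.comp_apply, LinearMap.lTensor_tmul,
      LinearEquiv.coe_coe, TensorProduct.rid_tmul, map_zero, hφ, ite_smul, one_smul,
      zero_smul, Finset.sum_ite_eq, Finset.mem_univ, if_true] at h1
    exact eq_neg_of_add_eq_zero_left h1
  have hinv : ∀ k : ℤ, -1 ≤ k → ∀ x ∈ E, ρ1 (L k) x ∈ E := by
    intro k hk
    have hle : Submodule.map (ρ1 (L k)) E ≤ E := by
      rw [hE, Submodule.map_span, Submodule.span_le]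
      rintro _ ⟨_, ⟨m, rfl⟩, rfl⟩
      rw [hformula k hk m]
      exact neg_mem (Submodule.sum_mem _ fun j _ =>
        Submodule.smul_mem _ _ (Submodule.subset_span (Set.mem_range_self j)))
    intro x hx
    exact hle (Submodule.mem_map_of_mem hx)
  haveI : FiniteDimensional ℂ E := FiniteDimensional.span_of_finite ℂ (Set.finite_range f1)
  set A : ℤ → Module.End ℂ E := fun k =>
    if h : -1 ≤ k then (ρ1 (L k)).restrict (hinv k h) else 0 with hA
  have hAval : ∀ k : ℤ, -1 ≤ k → ∀ x : E, ((A k x : E) : V1) = ρ1 (L k) x.1 := by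
    intro k hk x
    simp [hA, hk, LinearMap.restrict_apply]
  have hAbr : ∀ i j : ℤ, -1 ≤ i → -1 ≤ j → ⁅A i, A j⁆ = ((i - j : ℤ) : ℂ) • A (i + j) := by
    intro i j hi hj
    by_cases hij : i = j
    · subst hij; simp
    · have hijsum : -1 ≤ i + j := by omega
      ext x
      have hlie : ⁅ρ1 (L i), ρ1 (L j)⁆ = ((i - j : ℤ) : ℂ) • ρ1 (L (i + j)) := by
        rw [← LieHom.map_lie, hL i j hi hj, map_smul]
      have key := congrArg (fun (g : Module.End ℂ V1) => g x.1) hlie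
      simp only [Ring.lie_def, LinearMap.sub_apply, Module.End.mul_apply,
        LinearMap.smul_apply] at key
      simp only [Ring.lie_def, LinearMap.sub_apply, Module.End.mul_apply,
        LinearMap.smul_apply, Submodule.coe_sub, SetLike.val_smul]
      rw [hAval i hi (A j x), hAval j hj x, hAval j hj (A i x), hAval i hi x,
        hAval (i + j) hijsum x]
      exact key
  have htriv := witt_findim_trivial A hAbr
  intro k hk j
  have h0 : A k ⟨f1 j, hmem j⟩ = 0 := by rw [htriv k hk]; rfl
  have := hAval k hk ⟨f1 j, hmem j⟩
  rw [h0] at this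
  exact this.symm

/-- Hard direction of Theorem 2.10: if the product representation
`ρ = ρ_1 ⊗ 1 + 1 ⊗ ρ_2` of `W_>` kills `Σ_j f_{1,j} ⊗ f_{2,j}` for all `k ≥ -1`,
with each family `f_{i,·}` linearly independent, then `ρ_i(L_k)(f_{i,j}) = 0`
for all `i ∈ {1,2}`, all `j` and all `k ≥ -1`. -/
theorem product_rep_solution_factorizes {W V1 V2 : Type*} [LieRing W] [LieAlgebra ℂ W]
    [AddCommGroup V1] [Module ℂ V1] [AddCommGroup V2] [Module ℂ V2]
    (L : ℤ → W) (hW : IsWittBasis L)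
    (ρ1 : W →ₗ⁅ℂ⁆ Module.End ℂ V1) (ρ2 : W →ₗ⁅ℂ⁆ Module.End ℂ V2)
    (r : ℕ) (f1 : Fin r → V1) (f2 : Fin r → V2)
    (h1 : LinearIndependent ℂ f1) (h2 : LinearIndependent ℂ f2)
    (hz : ∀ k : ℤ, -1 ≤ k →
      (LinearMap.rTensor V2 (ρ1 (L k)) + LinearMap.lTensor V1 (ρ2 (L k)))
        (∑ j : Fin r, f1 j ⊗ₜ[ℂ] f2 j) = 0) :
    ∀ k : ℤ, -1 ≤ k → ∀ j : Fin r, ρ1 (L k) (f1 j) = 0 ∧ ρ2 (L k) (f2 j) = 0 := by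
  obtain ⟨hL, -, -⟩ := hW
  have hz1 : ∀ k : ℤ, -1 ≤ k →
      (∑ j : Fin r, (ρ1 (L k) (f1 j)) ⊗ₜ[ℂ] f2 j)
        + (∑ j : Fin r, f1 j ⊗ₜ[ℂ] (ρ2 (L k) (f2 j))) = 0 := by
    intro k hk
    have h0 := hz k hk
    simp only [LinearMap.add_apply, map_sum, LinearMap.rTensor_tmul,
      LinearMap.lTensor_tmul] at h0
    rw [Finset.sum_add_distrib] at h0
    exact h0
  have hz2 : ∀ k : ℤ, -1 ≤ k →
      (∑ j : Fin r, (ρ2 (L k) (f2 j)) ⊗ₜ[ℂ] f1 j)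
        + (∑ j : Fin r, f2 j ⊗ₜ[ℂ] (ρ1 (L k) (f1 j))) = 0 := by
    intro k hk
    have h0 := congrArg (TensorProduct.comm ℂ V1 V2) (hz1 k hk)
    simp only [map_add, map_sum, TensorProduct.comm_tmul, map_zero] at h0
    rw [add_comm] at h0
    exact h0
  intro k hk j
  exact ⟨one_side_trivial L hL ρ1 ρ2 r f1 f2 h2 hz1 k hk j,
    one_side_trivial L hL ρ2 ρ1 r f2 f1 h1 hz2 k hk j⟩
end

section
/- For each integer i ≥ -1, define the first-order differential operator σ(L_i) := (1/2)z^{-2i}(z∂_z + (1-2i)/2) + s·z^{-2i-3} acting on ℂ((z)) (formal Laurent series), where s ∈ ℂ is fixed. Then σ extends linearly to a Lie algebra homomorphism from W_> to the Lie algebra of first-order differential operators on ℂ((z)): [σ(L_i), σ(L_j)] = (i-j)σ(L_{i+j}) for all i,j ≥ -1. -/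
/-- The operator `z ∂_z` on formal Laurent series `ℂ((z))`, acting on coefficients by
`(z∂_z f).coeff n = n · f.coeff n`. -/
noncomputable def zDz : LaurentSeries ℂ →ₗ[ℂ] LaurentSeries ℂ where
  toFun f :=
    { coeff := fun n => (n : ℂ) * f.coeff n
      isPWO_support' := f.isPWO_support'.mono (by
        intro n hn
        simp only [Function.mem_support] at hn ⊢
        intro h
        exact hn (by rw [h, mul_zero])) }
  map_add' f g := by
    ext n
    simp [mul_add]
  map_smul' c f := by
    ext n
    simp
    ring

/-- Multiplication by `z^k` on `ℂ((z))`, acting on coefficients by the shift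
`(z^k · f).coeff n = f.coeff (n - k)`. -/
noncomputable def zPow (k : ℤ) : LaurentSeries ℂ →ₗ[ℂ] LaurentSeries ℂ where
  toFun f :=
    { coeff := fun n => f.coeff (n - k)
      isPWO_support' := by
        refine (f.isPWO_support'.image_of_monotone
          (f := fun m => m + k) (fun a b hab => by dsimp; omega)).mono ?_
        intro n hn
        exact ⟨n - k, hn, by ring⟩ }
  map_add' f g := by ext n; simp
  map_smul' c f := by ext n; simp

/-- The first-order differential operator
`σ(L_i) = (1/2) z^{-2i} (z∂_z + (1-2i)/2) + s z^{-2i-3}` on `ℂ((z))`. -/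
noncomputable def sigmaL (s : ℂ) (i : ℤ) : LaurentSeries ℂ →ₗ[ℂ] LaurentSeries ℂ :=
  ((1 : ℂ)/2) • (zPow (-2 * i) ∘ₗ (zDz + (((1 - 2 * i : ℤ) : ℂ)/2) • LinearMap.id))
    + s • zPow (-2 * i - 3)

/-- `σ` extends to a Lie algebra homomorphism `W_> → Diff¹(ℂ((z)))`:
`[σ(L_i), σ(L_j)] = (i - j) σ(L_{i+j})` for all `i, j ≥ -1`. -/
theorem sigmaL_is_hom (s : ℂ) :
    ∀ i j : ℤ, -1 ≤ i → -1 ≤ j →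
      sigmaL s i ∘ₗ sigmaL s j - sigmaL s j ∘ₗ sigmaL s i
        = ((i - j : ℤ) : ℂ) • sigmaL s (i + j) := by
  intro i j _ _
  ext f n
  simp only [sigmaL, zDz, zPow, LinearMap.sub_apply, LinearMap.comp_apply,
    LinearMap.add_apply, LinearMap.smul_apply, LinearMap.coe_mk, AddHom.coe_mk,
    LinearMap.id_apply, HahnSeries.coeff_add, HahnSeries.coeff_smul, HahnSeries.coeff_sub, smul_eq_mul]
  push_cast
  ring_nf
end
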